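/- (Ky Fan k-norm inequality) Let X ∈ ℝ^{m×n} have singular value decomposition X = U D Vᵀ with singular values in decreasing order on the diagonal of D. Then for every k with 1 ≤ k ≤ min(m,n), the sum of the first k diagonal entries of X is at most the sum of the first k singular values: ∑_{i=1}^k X_{ii} ≤ ∑_{i=1}^k σ_i. -/

import Mathlib

open Finset Matrix

private lemma sum_indicator_min (k j : ℕ) :
    ∑ a ∈ Finset.range j, (if a < k then (1:ℝ) else 0) = ((min j k : ℕ) : ℝ) := by
  induction j with
  | zero => simp
  | succ j ih =>
    rw [Finset.sum_range_succ, ih]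
    by_cases h : j < k
    · rw [if_pos h]
      have : min (j+1) k = min j k + 1 := by omega
      rw [this]; push_cast; ring
    · rw [if_neg h]
      have : min (j+1) k = min j k := by omega
      rw [this]; ring

private lemma abel_aux (k m : ℕ) (σ c : ℕ → ℝ)
    (hσ0 : ∀ i, 0 ≤ σ i) (hσd : ∀ i, σ (i+1) ≤ σ i)
    (hc1 : ∀ j, ∑ a ∈ Finset.range j, c a ≤ (j:ℝ))
    (hck : ∀ j, ∑ a ∈ Finset.range j, c a ≤ (k:ℝ)) :
    ∑ a ∈ Finset.range m, σ a * c a ≤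
    ∑ a ∈ Finset.range m, σ a * (if a < k then 1 else 0) := by
  set d : ℕ → ℝ := fun a => if a < k then (1:ℝ) else 0 with hd
  have hST : ∀ j, ∑ a ∈ Finset.range j, c a ≤ ∑ a ∈ Finset.range j, d a := by
    intro j
    rw [hd]
    rw [sum_indicator_min k j]
    rcases le_total j k with h | h
    · rw [min_eq_left h]; exact hc1 j
    · rw [min_eq_right h]; exact hck j
  have h1 : ∑ a ∈ Finset.range m, σ a * c a
      = σ (m-1) * (∑ a ∈ Finset.range m, c a)
        - ∑ i ∈ Finset.range (m-1), (σ (i+1) - σ i) * (∑ a ∈ Finset.range (i+1), c a) := by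
    simpa [smul_eq_mul] using Finset.sum_range_by_parts σ c m
  have h2 : ∑ a ∈ Finset.range m, σ a * d a
      = σ (m-1) * (∑ a ∈ Finset.range m, d a)
        - ∑ i ∈ Finset.range (m-1), (σ (i+1) - σ i) * (∑ a ∈ Finset.range (i+1), d a) := by
    simpa [smul_eq_mul] using Finset.sum_range_by_parts σ d m
  rw [h1, h2]
  apply sub_le_sub
  · exact mul_le_mul_of_nonneg_left (hST m) (hσ0 _)
  · apply Finset.sum_le_sum
    intro i _
    exact mul_le_mul_of_nonpos_left (hST (i+1)) (by linarith [hσd i])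

theorem ky_fan_partial_trace_ineq (m n : ℕ) (hmn : m ≤ n)
    (X : Matrix (Fin m) (Fin n) ℝ)
    (U : Matrix (Fin m) (Fin m) ℝ) (V : Matrix (Fin n) (Fin n) ℝ)
    (hU : U ∈ Matrix.orthogonalGroup (Fin m) ℝ)
    (hV : V ∈ Matrix.orthogonalGroup (Fin n) ℝ)
    (σ : Fin m → ℝ) (hσ0 : ∀ i, 0 ≤ σ i) (hσdec : Antitone σ)
    (hX : X = U * (Matrix.of fun (i : Fin m) (j : Fin n) => if (i : ℕ) = (j : ℕ) then σ i else 0) * Vᵀ) :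
    ∀ k, 1 ≤ k → k ≤ m →
      ∑ i ∈ univ.filter (fun i : Fin m => (i : ℕ) < k), X i (Fin.castLE hmn i) ≤
      ∑ i ∈ univ.filter (fun i : Fin m => (i : ℕ) < k), σ i := by
  intro k hk1 hkm
  -- orthogonality facts
  have hUUt : U * Uᵀ = 1 := by
    simpa [Matrix.star_eq_conjTranspose, Matrix.conjTranspose_eq_transpose_of_trivial] using hU.2
  have hUtU : Uᵀ * U = 1 := by
    simpa [Matrix.star_eq_conjTranspose, Matrix.conjTranspose_eq_transpose_of_trivial] using hU.1
  have hVVt : V * Vᵀ = 1 := by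
    simpa [Matrix.star_eq_conjTranspose, Matrix.conjTranspose_eq_transpose_of_trivial] using hV.2
  have hVtV : Vᵀ * V = 1 := by
    simpa [Matrix.star_eq_conjTranspose, Matrix.conjTranspose_eq_transpose_of_trivial] using hV.1
  have rowU : ∀ i : Fin m, ∑ a : Fin m, U i a ^ 2 = 1 := by
    intro i
    have := congrFun (congrFun hUUt i) i
    simp only [Matrix.mul_apply, Matrix.transpose_apply, Matrix.one_apply_eq] at this
    simpa [sq] using this
  have colU : ∀ a : Fin m, ∑ i : Fin m, U i a ^ 2 = 1 := by
    intro a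
    have := congrFun (congrFun hUtU a) a
    simp only [Matrix.mul_apply, Matrix.transpose_apply, Matrix.one_apply_eq] at this
    simpa [sq] using this
  have rowV : ∀ j : Fin n, ∑ b : Fin n, V j b ^ 2 = 1 := by
    intro j
    have := congrFun (congrFun hVVt j) j
    simp only [Matrix.mul_apply, Matrix.transpose_apply, Matrix.one_apply_eq] at this
    simpa [sq] using this
  have colV : ∀ b : Fin n, ∑ j : Fin n, V j b ^ 2 = 1 := by
    intro b
    have := congrFun (congrFun hVtV b) b
    simp only [Matrix.mul_apply, Matrix.transpose_apply, Matrix.one_apply_eq] at this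
    simpa [sq] using this
  -- restriction of a nonneg sum over Fin n to the castLE image
  have hcast : ∀ g : Fin n → ℝ, (∀ j, 0 ≤ g j) →
      ∑ i : Fin m, g (Fin.castLE hmn i) ≤ ∑ j : Fin n, g j := by
    intro g hg
    have : ∑ i : Fin m, g (Fin.castLE hmn i)
        = ∑ j ∈ Finset.univ.map (Fin.castLEEmb hmn), g j := by
      rw [Finset.sum_map]; rfl
    rw [this]
    exact Finset.sum_le_sum_of_subset_of_nonneg (Finset.subset_univ _) (fun j _ _ => hg j)
  -- pairing bound
  have pair : ∀ (s : Finset (Fin m)) (f g : Fin m → ℝ),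
      (∑ i ∈ s, f i ^ 2 ≤ 1) → (∑ i ∈ s, g i ^ 2 ≤ 1) → ∑ i ∈ s, f i * g i ≤ 1 := by
    intro s f g hf hg
    have h1 : ∑ i ∈ s, f i * g i ≤ ∑ i ∈ s, (f i ^ 2 + g i ^ 2) / 2 :=
      Finset.sum_le_sum (fun i _ => by nlinarith [sq_nonneg (f i - g i)])
    have h2 : ∑ i ∈ s, (f i ^ 2 + g i ^ 2) / 2
        = ((∑ i ∈ s, f i ^ 2) + ∑ i ∈ s, g i ^ 2) / 2 := by
      rw [← Finset.sum_div, Finset.sum_add_distrib]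
    linarith
  set F : Finset (Fin m) := Finset.univ.filter (fun i : Fin m => (i : ℕ) < k) with hF
  -- entry formula
  have hentry : ∀ (i : Fin m) (j : Fin n),
      X i j = ∑ a : Fin m, U i a * (σ a * V j (Fin.castLE hmn a)) := by
    intro i j
    rw [hX]
    simp only [Matrix.mul_apply, Matrix.transpose_apply, Matrix.of_apply]
    simp_rw [Finset.sum_mul]
    rw [Finset.sum_comm]
    apply Finset.sum_congr rfl
    intro a _
    rw [Finset.sum_eq_single (Fin.castLE hmn a)]
    · have h0 : (↑a : ℕ) = ↑(Fin.castLE hmn a) := rfl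
      rw [if_pos h0]; ring
    · intro b _ hb
      rw [if_neg (fun hab : (a:ℕ) = (b:ℕ) => hb (Fin.ext (show (b:ℕ) = ((Fin.castLE hmn a : Fin n)) from hab.symm)))]
      ring
    · intro h; exact absurd (Finset.mem_univ _) h
  set c : Fin m → ℝ :=
    fun a => ∑ i ∈ F, U i a * V (Fin.castLE hmn i) (Fin.castLE hmn a) with hc
  have hLHS : ∑ i ∈ F, X i (Fin.castLE hmn i) = ∑ a : Fin m, σ a * c a := by
    simp_rw [hentry]
    rw [Finset.sum_comm]
    apply Finset.sum_congr rfl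
    intro a _
    rw [hc, Finset.mul_sum]
    apply Finset.sum_congr rfl
    intro i _
    ring
  have hUrow_le : ∀ (s : Finset (Fin m)) (i : Fin m), ∑ a ∈ s, U i a ^ 2 ≤ 1 := by
    intro s i
    rw [← rowU i]
    exact Finset.sum_le_sum_of_subset_of_nonneg (Finset.subset_univ s) (fun _ _ _ => sq_nonneg _)
  have hUcol_le : ∀ (s : Finset (Fin m)) (a : Fin m), ∑ i ∈ s, U i a ^ 2 ≤ 1 := by
    intro s a
    rw [← colU a]
    exact Finset.sum_le_sum_of_subset_of_nonneg (Finset.subset_univ s) (fun _ _ _ => sq_nonneg _)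
  have hVrow_le : ∀ (s : Finset (Fin m)) (i : Fin m),
      ∑ a ∈ s, V (Fin.castLE hmn i) (Fin.castLE hmn a) ^ 2 ≤ 1 := by
    intro s i
    calc ∑ a ∈ s, V (Fin.castLE hmn i) (Fin.castLE hmn a) ^ 2
        ≤ ∑ a : Fin m, V (Fin.castLE hmn i) (Fin.castLE hmn a) ^ 2 :=
          Finset.sum_le_sum_of_subset_of_nonneg (Finset.subset_univ s) (fun _ _ _ => sq_nonneg _)
      _ ≤ ∑ b : Fin n, V (Fin.castLE hmn i) b ^ 2 :=
          hcast (fun b => V (Fin.castLE hmn i) b ^ 2) (fun b => sq_nonneg _)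
      _ = 1 := rowV _
  have hVcol_le : ∀ (s : Finset (Fin m)) (a : Fin m),
      ∑ i ∈ s, V (Fin.castLE hmn i) (Fin.castLE hmn a) ^ 2 ≤ 1 := by
    intro s a
    calc ∑ i ∈ s, V (Fin.castLE hmn i) (Fin.castLE hmn a) ^ 2
        ≤ ∑ i : Fin m, V (Fin.castLE hmn i) (Fin.castLE hmn a) ^ 2 :=
          Finset.sum_le_sum_of_subset_of_nonneg (Finset.subset_univ s) (fun _ _ _ => sq_nonneg _)
      _ ≤ ∑ j : Fin n, V j (Fin.castLE hmn a) ^ 2 :=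
          hcast (fun j => V j (Fin.castLE hmn a) ^ 2) (fun j => sq_nonneg _)
      _ = 1 := colV _
  have hc1 : ∀ a : Fin m, c a ≤ 1 := by
    intro a
    exact pair F (fun i => U i a) (fun i => V (Fin.castLE hmn i) (Fin.castLE hmn a))
      (hUcol_le F a) (hVcol_le F a)
  have hFcard : F.card = k := by
    have hFeq : F = Finset.map (Fin.castLEEmb hkm) Finset.univ := by
      ext a
      simp only [hF, Finset.mem_filter, Finset.mem_univ, true_and, Finset.mem_map,
        Fin.castLEEmb, Function.Embedding.coeFn_mk]
      constructor
      · intro h; exact ⟨⟨(a : ℕ), h⟩, Fin.ext rfl⟩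
      · rintro ⟨b, rfl⟩; exact b.isLt
    rw [hFeq, Finset.card_map, Finset.card_univ, Fintype.card_fin]
  have hcS : ∀ s : Finset (Fin m), ∑ a ∈ s, c a ≤ (k : ℝ) := by
    intro s
    have hswap : ∑ a ∈ s, c a
        = ∑ i ∈ F, ∑ a ∈ s, U i a * V (Fin.castLE hmn i) (Fin.castLE hmn a) := by
      rw [hc, Finset.sum_comm]
    rw [hswap]
    calc ∑ i ∈ F, ∑ a ∈ s, U i a * V (Fin.castLE hmn i) (Fin.castLE hmn a)
        ≤ ∑ _i ∈ F, (1:ℝ) := Finset.sum_le_sum (fun i _ =>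
          pair s (fun a => U i a) (fun a => V (Fin.castLE hmn i) (Fin.castLE hmn a))
            (hUrow_le s i) (hVrow_le s i))
      _ = (F.card : ℝ) := by rw [Finset.sum_const, nsmul_eq_mul, mul_one]
      _ = (k : ℝ) := by rw [hFcard]
  have hcard_le : ∀ j : ℕ,
      (Finset.univ.filter (fun a : Fin m => (a : ℕ) < j)).card ≤ j := by
    intro j
    have := Finset.card_le_card_of_injOn (s := Finset.univ.filter (fun a : Fin m => (a : ℕ) < j))
      (t := Finset.range j) (fun a : Fin m => (a : ℕ))
      (fun a ha => Finset.mem_range.mpr (Finset.mem_filter.mp ha).2)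
      (fun a _ b _ h => Fin.ext h)
    simpa [Finset.card_range] using this
  -- transfer to ℕ-indexed sums
  have hconv : ∀ (g : Fin m → ℝ) (j : ℕ),
      ∑ a ∈ Finset.range j, (if h : a < m then g ⟨a, h⟩ else 0)
        = ∑ a ∈ Finset.univ.filter (fun a : Fin m => (a : ℕ) < j), g a := by
    intro g j
    induction j with
    | zero => simp
    | succ j ih =>
      rw [Finset.sum_range_succ, ih]
      by_cases h : j < m
      · have heq : Finset.univ.filter (fun a : Fin m => (a : ℕ) < j + 1)
            = insert (⟨j, h⟩ : Fin m) (Finset.univ.filter (fun a : Fin m => (a : ℕ) < j)) := by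
          ext a
          simp only [Finset.mem_filter, Finset.mem_univ, true_and, Finset.mem_insert]
          constructor
          · intro ha
            rcases Nat.lt_succ_iff_lt_or_eq.mp ha with h' | h'
            · exact Or.inr h'
            · exact Or.inl (Fin.ext h')
          · rintro (rfl | ha)
            · exact Nat.lt_succ_self j
            · exact Nat.lt_succ_of_lt ha
        rw [heq, Finset.sum_insert (by simp), dif_pos h]
        ring
      · have heq : Finset.univ.filter (fun a : Fin m => (a : ℕ) < j + 1)
            = Finset.univ.filter (fun a : Fin m => (a : ℕ) < j) := by
          ext a
          simp only [Finset.mem_filter, Finset.mem_univ, true_and]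
          have := a.isLt
          omega
        rw [heq, dif_neg h]
        ring
  set σ' : ℕ → ℝ := fun a => if h : a < m then σ ⟨a, h⟩ else 0 with hσ'
  set c' : ℕ → ℝ := fun a => if h : a < m then c ⟨a, h⟩ else 0 with hc'
  have hσ'0 : ∀ i, 0 ≤ σ' i := by
    intro i; rw [hσ']; dsimp only; split
    · exact hσ0 _
    · exact le_refl 0
  have hσ'd : ∀ i, σ' (i + 1) ≤ σ' i := by
    intro i; rw [hσ']; dsimp only
    by_cases h1 : i + 1 < m
    · rw [dif_pos h1, dif_pos (Nat.lt_of_succ_lt h1)]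
      exact hσdec (by simp [Fin.le_def])
    · rw [dif_neg h1]
      split
      · exact hσ0 _
      · exact le_refl 0
  have hc'1 : ∀ j, ∑ a ∈ Finset.range j, c' a ≤ (j : ℝ) := by
    intro j
    rw [hc', hconv c j]
    calc ∑ a ∈ Finset.univ.filter (fun a : Fin m => (a : ℕ) < j), c a
        ≤ ∑ _a ∈ Finset.univ.filter (fun a : Fin m => (a : ℕ) < j), (1:ℝ) :=
          Finset.sum_le_sum (fun a _ => hc1 a)
      _ = ((Finset.univ.filter (fun a : Fin m => (a : ℕ) < j)).card : ℝ) := by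
          rw [Finset.sum_const, nsmul_eq_mul, mul_one]
      _ ≤ (j : ℝ) := Nat.cast_le.mpr (hcard_le j)
  have hc'k : ∀ j, ∑ a ∈ Finset.range j, c' a ≤ (k : ℝ) := by
    intro j
    rw [hc', hconv c j]
    exact hcS _
  have habel := abel_aux k m σ' c' hσ'0 hσ'd hc'1 hc'k
  have hL : ∑ a ∈ Finset.range m, σ' a * c' a = ∑ a : Fin m, σ a * c a := by
    have hpt : ∀ a : ℕ, σ' a * c' a = if h : a < m then σ ⟨a, h⟩ * c ⟨a, h⟩ else 0 := by
      intro a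
      rw [hσ', hc']; dsimp only
      by_cases h : a < m
      · rw [dif_pos h, dif_pos h, dif_pos h]
      · rw [dif_neg h, dif_neg h, dif_neg h, zero_mul]
    rw [Finset.sum_congr rfl (fun a _ => hpt a), hconv (fun a => σ a * c a) m]
    apply Finset.sum_congr _ (fun _ _ => rfl)
    ext a
    simp [a.isLt]
  have hR : ∑ a ∈ Finset.range m, σ' a * (if a < k then 1 else 0) = ∑ i ∈ F, σ i := by
    have hpt : ∀ a : ℕ, σ' a * (if a < k then (1:ℝ) else 0)
        = if h : a < m then (if (a : ℕ) < k then σ ⟨a, h⟩ else 0) else 0 := by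
      intro a
      rw [hσ']; dsimp only
      by_cases h : a < m
      · rw [dif_pos h, dif_pos h]
        by_cases h2 : a < k
        · rw [if_pos h2, if_pos h2, mul_one]
        · rw [if_neg h2, if_neg h2, mul_zero]
      · rw [dif_neg h, dif_neg h, zero_mul]
    rw [Finset.sum_congr rfl (fun a _ => hpt a),
      hconv (fun a : Fin m => if (a : ℕ) < k then σ a else 0) m]
    have huniv : Finset.univ.filter (fun a : Fin m => (a : ℕ) < m) = Finset.univ := by
      ext a; simp [a.isLt]
    rw [huniv, hF, Finset.sum_filter]
  rw [hLHS, ← hL, ← hR]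
  exact habel
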